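/- For every finite simple graph on n ≥ 2 vertices with m edges and vertex degrees k_1, …, k_n, one has ∑_{i=1}^n k_i² ≤ m·(2m/(n−1) + n − 2). -/

import Mathlib

open Finset SimpleGraph

lemma arith0 (x m Q : ℝ) (hx : 2 ≤ x) (hm : 0 ≤ m)
    (h3 : 2*m ≤ x*(x-1)) (hQ : Q ≤ 2*m^2/(x-1) + m*(x-2)) :
    Q ≤ 2*m^2/x + m*(x-1) := by
  have hx0 : (0:ℝ) < x := by linarith
  have hx1 : (0:ℝ) < x - 1 := by linarith
  have e1 : 2*m^2/(x-1) - 2*m^2/x = 2*m^2/(x*(x-1)) := by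
    field_simp
    ring
  have e2 : 2*m^2/(x*(x-1)) ≤ m := by
    rw [div_le_iff₀ (by positivity)]
    nlinarith
  linarith

lemma arith1 (x m d S Q Q' : ℝ) (hx : 2 ≤ x) (hd1 : 1 ≤ d) (hdx : d ≤ x)
    (h1 : (x+1)*d ≤ 2*m) (h3 : 2*m ≤ 2*d + x*(x-1))
    (hB1 : d + S + (x - d)*d ≤ 2*m) (hB2 : S ≤ d*x)
    (hQ' : Q' ≤ 2*(m-d)^2/(x-1) + (m-d)*(x-2))
    (hQ : Q = Q' + d^2 + 2*S - d) :
    Q ≤ 2*m^2/x + m*(x-1) := by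
  have hx0 : (0:ℝ) < x := by linarith
  have hx1 : (0:ℝ) < x - 1 := by linarith
  have hQ'' : (x-1)*Q' ≤ 2*(m-d)^2 + (m-d)*(x-2)*(x-1) := by
    have h := mul_le_mul_of_nonneg_left hQ' (le_of_lt hx1)
    have hrw : (x-1) * (2*(m-d)^2/(x-1) + (m-d)*(x-2)) = 2*(m-d)^2 + (m-d)*(x-2)*(x-1) := by
      field_simp
    linarith [hrw ▸ h]
  have hQx : x*((x-1)*Q') ≤ x*(2*(m-d)^2 + (m-d)*(x-2)*(x-1)) :=
    mul_le_mul_of_nonneg_left hQ'' hx0.le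
  rw [show 2*m^2/x + m*(x-1) = (2*m^2 + m*(x-1)*x)/x by field_simp,
      le_div_iff₀ hx0]
  have hfin : (x-1)*(Q*x) ≤ (x-1)*(2*m^2 + m*(x-1)*x) := by
    have hQmul : (x-1)*(Q*x) = x*((x-1)*Q') + x*(x-1)*(d^2+2*S-d) := by
      rw [hQ]; ring
    have h2x : (0:ℝ) ≤ x - 2 := by linarith
    have hd0 : (0:ℝ) ≤ d - 1 := by linarith
    have he4 : (0:ℝ) ≤ 2*m - (x+1)*d := by linarith
    have he5 : (0:ℝ) ≤ 2*d + x*(x-1) - 2*m := by linarith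
    rcases le_total (d*x) (2*m - d - (x-d)*d) with hc | hc
    · have hcA : (0:ℝ) ≤ 2*m - d - (x-d)*d - d*x := by linarith
      have hSA : (0:ℝ) ≤ x*(x-1)*(d*x - S) :=
        mul_nonneg (by positivity) (by linarith)
      linarith [hQmul, hQx, hSA,
        mul_nonneg (mul_nonneg h2x hd0) he4,
        mul_nonneg hd0 hcA, hcA,
        mul_nonneg hd0 he4,
        mul_nonneg h2x hcA,
        mul_nonneg (mul_nonneg h2x hd0) hcA,
        mul_nonneg he5 hcA,
        mul_nonneg (mul_nonneg hd0 hd0) he4]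
    · have hcB : (0:ℝ) ≤ d*x - (2*m - d - (x-d)*d) := by linarith
      have hSB : (0:ℝ) ≤ x*(x-1)*((2*m - d - (x-d)*d) - S) :=
        mul_nonneg (by positivity) (by linarith)
      have hdm : (0:ℝ) ≤ m - d := by nlinarith
      linarith [hQmul, hQx, hSB,
        mul_nonneg h2x hcB,
        mul_nonneg he5 hcB,
        mul_nonneg hdm hcB,
        mul_nonneg he4 hcB,
        mul_nonneg (mul_nonneg h2x h2x) hcB,
        mul_nonneg hd0 he4,
        mul_nonneg (mul_nonneg hd0 hd0) he4,
        mul_nonneg (mul_nonneg h2x hd0) he4]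
  have := le_of_mul_le_mul_left hfin hx1
  linarith

def DCStmt (n : ℕ) (G : SimpleGraph (Fin n)) (inst : DecidableRel G.Adj) : Prop :=
  letI := inst
  ∑ i, (G.degree i : ℝ) ^ 2
    ≤ (G.edgeFinset.card : ℝ) * (2 * (G.edgeFinset.card : ℝ) / ((n : ℝ) - 1) + (n : ℝ) - 2)

lemma aux_de_caen (n : ℕ) (hn : 2 ≤ n) :
    ∀ (G : SimpleGraph (Fin n)) (inst : DecidableRel G.Adj), DCStmt n G inst := by
  induction n, hn using Nat.le_induction with
  | base =>
    intro G inst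
    unfold DCStmt
    letI := inst
    letI := inst
    have hd1 : ∀ u, G.degree u ≤ 1 := by
      intro u
      have := G.degree_lt_card_verts u
      simpa using Nat.lt_succ_iff.mp (by simpa using this)
    have hHS : ∑ u, G.degree u = 2 * G.edgeFinset.card := G.sum_degrees_eq_twice_card_edges
    have hM1 : G.edgeFinset.card ≤ 1 := by
      have : ∑ u, G.degree u ≤ 2 := by
        calc ∑ u, G.degree u ≤ ∑ _u : Fin 2, 1 := Finset.sum_le_sum fun u _ => hd1 u
        _ = 2 := by simp
      omega
    have hQ : ∑ u, G.degree u ^ 2 ≤ 2 * G.edgeFinset.card := by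
      rw [← hHS]
      exact Finset.sum_le_sum fun u _ => by nlinarith [hd1 u]
    have hcast : ∑ i, (G.degree i : ℝ) ^ 2 = ((∑ u, G.degree u ^ 2 : ℕ) : ℝ) := by push_cast; rfl
    rw [hcast]
    interval_cases h : G.edgeFinset.card
    · have : (∑ u, G.degree u ^ 2) = 0 := by omega
      rw [this]; norm_num
    · have h2 : ((∑ u, G.degree u ^ 2 : ℕ) : ℝ) ≤ 2 := by exact_mod_cast hQ
      have e : ((1:ℕ):ℝ) * (2 * ((1:ℕ):ℝ) / (((2:ℕ):ℝ) - 1) + ((2:ℕ):ℝ) - 2) = 2 := by norm_num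
      rw [e]
      exact h2
  | succ n hn ih =>
    intro G inst
    unfold DCStmt
    letI := inst
    obtain ⟨v, -, hv⟩ := Finset.univ.exists_min_image (fun u => G.degree u) ⟨0, Finset.mem_univ _⟩
    set f : Fin n → Fin (n+1) := v.succAbove with hf
    have hfinj : Function.Injective f := Fin.succAbove_right_injective
    letI instG' : DecidableRel (G.comap f).Adj := fun a b => inst (f a) (f b)
    -- nat degree relation
    have hkey : ∀ i : Fin n,
        (G.comap f).degree i + (if G.Adj (f i) v then 1 else 0) = G.degree (f i) := by
      intro i
      have himg : ((G.comap f).neighborFinset i).image f = (G.neighborFinset (f i)).erase v := by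
        ext u
        simp only [Finset.mem_image, SimpleGraph.mem_neighborFinset, Finset.mem_erase,
          SimpleGraph.comap_adj]
        constructor
        · rintro ⟨j, hj, rfl⟩
          exact ⟨Fin.succAbove_ne v j, hj⟩
        · rintro ⟨hne, hadj⟩
          obtain ⟨j, rfl⟩ := Fin.exists_succAbove_eq hne
          exact ⟨j, hadj, rfl⟩
      have hcard : (G.comap f).degree i = ((G.neighborFinset (f i)).erase v).card := by
        rw [← himg, Finset.card_image_of_injective _ hfinj]
        rfl
      have hdd : G.degree (f i) = (G.neighborFinset (f i)).card := rfl
      by_cases hav : G.Adj (f i) v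
      · have hvmem : v ∈ G.neighborFinset (f i) := (G.mem_neighborFinset (f i) v).mpr hav
        have hpos : 1 ≤ (G.neighborFinset (f i)).card := Finset.card_pos.mpr ⟨v, hvmem⟩
        rw [hcard, Finset.card_erase_of_mem hvmem, if_pos hav]
        omega
      · have hnm : v ∉ G.neighborFinset (f i) := fun hmem =>
          hav ((G.mem_neighborFinset (f i) v).mp hmem)
        rw [hcard, Finset.erase_eq_of_notMem hnm, if_neg hav]
        omega
    -- real abbreviations
    set A : Fin (n+1) → ℝ := fun u => if G.Adj u v then 1 else 0 with hA
    have hA0 : ∀ u, 0 ≤ A u := by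
      intro u; by_cases h : G.Adj u v <;> simp [hA, h]
    have hA1 : ∀ u, A u ≤ 1 := by
      intro u; by_cases h : G.Adj u v <;> simp [hA, h]
    have hAsq : ∀ u, A u * A u = A u := by
      intro u; by_cases h : G.Adj u v <;> simp [hA, h]
    have hAv : A v = 0 := by simp [hA]
    have hAsum : ∑ u, A u = (G.degree v : ℝ) := by
      rw [hA]
      rw [Finset.sum_boole]
      congr 1
      have : (Finset.univ.filter fun u => G.Adj u v) = G.neighborFinset v := by
        ext u
        simp [G.mem_neighborFinset, SimpleGraph.adj_comm]
      rw [this]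
      rfl
    have hdR : ∀ i : Fin n, ((G.comap f).degree i : ℝ) = (G.degree (f i) : ℝ) - A (f i) := by
      intro i
      have h := hkey i
      by_cases hav : G.Adj (f i) v
      · rw [if_pos hav] at h
        have h2 : ((G.comap f).degree i : ℝ) + 1 = (G.degree (f i) : ℝ) := by exact_mod_cast h
        simp only [hA, if_pos hav]
        linarith
      · rw [if_neg hav] at h
        have h2 : ((G.comap f).degree i : ℝ) = (G.degree (f i) : ℝ) := by exact_mod_cast h
        simp only [hA, if_neg hav]
        linarith
    have hHS : ∑ u, (G.degree u : ℝ) = 2 * (G.edgeFinset.card : ℝ) := by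
      exact_mod_cast congrArg (Nat.cast (R := ℝ)) G.sum_degrees_eq_twice_card_edges
    have hHS' : ∑ i, ((G.comap f).degree i : ℝ) = 2 * ((G.comap f).edgeFinset.card : ℝ) := by
      exact_mod_cast congrArg (Nat.cast (R := ℝ)) (G.comap f).sum_degrees_eq_twice_card_edges
    have hsplit : ∀ g : Fin (n+1) → ℝ, ∑ u, g u = g v + ∑ i, g (f i) :=
      fun g => Fin.sum_univ_succAbove g v
    have esum1 : ∑ i, (G.degree (f i) : ℝ) = 2 * (G.edgeFinset.card : ℝ) - (G.degree v : ℝ) := by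
      have := hsplit fun u => (G.degree u : ℝ)
      rw [hHS] at this
      linarith
    have esum2 : ∑ i, A (f i) = (G.degree v : ℝ) := by
      have := hsplit A
      rw [hAsum, hAv] at this
      linarith
    have hMM' : ((G.comap f).edgeFinset.card : ℝ) = (G.edgeFinset.card : ℝ) - (G.degree v : ℝ) := by
      have e3 : ∑ i, ((G.comap f).degree i : ℝ) = ∑ i, ((G.degree (f i) : ℝ) - A (f i)) :=
        Finset.sum_congr rfl fun i _ => hdR i
      rw [Finset.sum_sub_distrib, esum1, esum2, hHS'] at e3
      linarith
    set S : ℝ := ∑ u, A u * (G.degree u : ℝ) with hSdef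
    have esum3 : ∑ i, A (f i) * (G.degree (f i) : ℝ) = S := by
      have := hsplit fun u => A u * (G.degree u : ℝ)
      rw [hAv] at this
      rw [hSdef]
      linarith
    have hQrel : ∑ u, (G.degree u : ℝ) ^ 2
        = (∑ i, ((G.comap f).degree i : ℝ) ^ 2) + (G.degree v : ℝ) ^ 2 + 2 * S
          - (G.degree v : ℝ) := by
      have hsq : ∀ i : Fin n, (G.degree (f i) : ℝ) ^ 2
          = ((G.comap f).degree i : ℝ) ^ 2 + 2 * (A (f i) * (G.degree (f i) : ℝ)) - A (f i) := by
        intro i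
        have h := hdR i
        have h2 := hAsq (f i)
        rw [h]
        ring_nf
        nlinarith [h2]
      have e4 : ∑ i, (G.degree (f i) : ℝ) ^ 2
          = (∑ i, ((G.comap f).degree i : ℝ) ^ 2) + 2 * S - (G.degree v : ℝ) := by
        rw [Finset.sum_congr rfl fun i _ => hsq i]
        rw [Finset.sum_sub_distrib, Finset.sum_add_distrib, ← Finset.mul_sum, esum3, esum2]
      have := hsplit fun u => (G.degree u : ℝ) ^ 2
      rw [e4] at this
      linarith
    -- degree bounds
    have hdlt : ∀ u, (G.degree u : ℝ) ≤ (n : ℝ) := by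
      intro u
      have := G.degree_lt_card_verts u
      rw [Fintype.card_fin] at this
      exact_mod_cast Nat.lt_succ_iff.mp this
    have hdlt' : ∀ i, ((G.comap f).degree i : ℝ) ≤ (n : ℝ) - 1 := by
      intro i
      have := (G.comap f).degree_lt_card_verts i
      rw [Fintype.card_fin] at this
      have h2 : (G.comap f).degree i + 1 ≤ n := this
      have : (((G.comap f).degree i : ℝ)) + 1 ≤ (n : ℝ) := by exact_mod_cast h2
      linarith
    have hmin : ∀ u, (G.degree v : ℝ) ≤ (G.degree u : ℝ) := fun u => by
      exact_mod_cast hv u (Finset.mem_univ u)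
    have hC1 : ((n : ℝ) + 1) * (G.degree v : ℝ) ≤ 2 * (G.edgeFinset.card : ℝ) := by
      have : ∑ _u : Fin (n+1), (G.degree v : ℝ) ≤ ∑ u, (G.degree u : ℝ) :=
        Finset.sum_le_sum fun u _ => hmin u
      rw [Finset.sum_const, Finset.card_univ, Fintype.card_fin, nsmul_eq_mul] at this
      rw [hHS] at this
      push_cast at this
      linarith
    have hC3 : 2 * (G.edgeFinset.card : ℝ) - 2 * (G.degree v : ℝ) ≤ (n : ℝ) * ((n : ℝ) - 1) := by
      have : ∑ i, ((G.comap f).degree i : ℝ) ≤ ∑ _i : Fin n, ((n : ℝ) - 1) :=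
        Finset.sum_le_sum fun i _ => hdlt' i
      rw [Finset.sum_const, Finset.card_univ, Fintype.card_fin, nsmul_eq_mul, hHS', hMM'] at this
      linarith
    have hB2 : S ≤ (G.degree v : ℝ) * (n : ℝ) := by
      have : S ≤ ∑ u, A u * (n : ℝ) := by
        rw [hSdef]
        exact Finset.sum_le_sum fun u _ => mul_le_mul_of_nonneg_left (hdlt u) (hA0 u)
      rw [← Finset.sum_mul, hAsum] at this
      exact this
    have hB1 : (G.degree v : ℝ) + S + ((n : ℝ) - (G.degree v : ℝ)) * (G.degree v : ℝ)
        ≤ 2 * (G.edgeFinset.card : ℝ) := by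
      have e5 : ∑ u, (1 - A u) * (G.degree v : ℝ) ≤ ∑ u, (1 - A u) * (G.degree u : ℝ) :=
        Finset.sum_le_sum fun u _ =>
          mul_le_mul_of_nonneg_left (hmin u) (by linarith [hA1 u])
      have e6 : ∑ u, (1 - A u) * (G.degree u : ℝ)
          = 2 * (G.edgeFinset.card : ℝ) - S := by
        have : ∀ u, (1 - A u) * (G.degree u : ℝ)
            = (G.degree u : ℝ) - A u * (G.degree u : ℝ) := fun u => by ring
        rw [Finset.sum_congr rfl fun u _ => this u, Finset.sum_sub_distrib, hHS, hSdef]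
      have e7 : ∑ u, (1 - A u) * (G.degree v : ℝ)
          = (((n : ℝ) + 1) - (G.degree v : ℝ)) * (G.degree v : ℝ) := by
        rw [← Finset.sum_mul]
        congr 1
        rw [Finset.sum_sub_distrib, hAsum, Finset.sum_const, Finset.card_univ, Fintype.card_fin,
          nsmul_eq_mul]
        push_cast
        ring
      rw [e6, e7] at e5
      nlinarith [e5]
    -- apply IH
    have hIH := ih (G.comap f) instG'
    unfold DCStmt at hIH
    have hIHr : ∑ i, ((G.comap f).degree i : ℝ) ^ 2
        ≤ 2*((G.edgeFinset.card : ℝ) - (G.degree v : ℝ))^2/((n:ℝ)-1)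
          + ((G.edgeFinset.card : ℝ) - (G.degree v : ℝ))*((n:ℝ)-2) := by
      rw [hMM'] at hIH
      calc ∑ i, ((G.comap f).degree i : ℝ) ^ 2
          ≤ ((G.edgeFinset.card : ℝ) - (G.degree v : ℝ))
            * (2 * ((G.edgeFinset.card : ℝ) - (G.degree v : ℝ)) / ((n : ℝ) - 1) + (n : ℝ) - 2) := hIH
        _ = 2*((G.edgeFinset.card : ℝ) - (G.degree v : ℝ))^2/((n:ℝ)-1)
            + ((G.edgeFinset.card : ℝ) - (G.degree v : ℝ))*((n:ℝ)-2) := by ring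
    have hgoal_eq : ((G.edgeFinset.card : ℝ)) * (2 * (G.edgeFinset.card : ℝ) / (((n+1 : ℕ) : ℝ) - 1) + ((n+1 : ℕ) : ℝ) - 2)
        = 2*(G.edgeFinset.card : ℝ)^2/(n:ℝ) + (G.edgeFinset.card : ℝ)*((n:ℝ)-1) := by
      push_cast
      ring
    rw [hgoal_eq]
    have hxn : (2:ℝ) ≤ (n:ℝ) := by exact_mod_cast hn
    have hM0 : (0:ℝ) ≤ (G.edgeFinset.card : ℝ) := Nat.cast_nonneg _
    rcases Nat.eq_zero_or_pos (G.degree v) with h0 | h1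
    · -- isolated vertex
      have hdv0 : (G.degree v : ℝ) = 0 := by exact_mod_cast h0
      have hAzero : ∀ u, A u = 0 := by
        intro u
        by_cases hadj : G.Adj u v
        · exfalso
          have hmem : u ∈ G.neighborFinset v := (G.mem_neighborFinset v u).mpr hadj.symm
          have : G.neighborFinset v = ∅ := Finset.card_eq_zero.mp h0
          rw [this] at hmem
          exact absurd hmem (Finset.notMem_empty u)
        · simp [hA, hadj]
      have hS0 : S = 0 := by
        rw [hSdef]
        exact Finset.sum_eq_zero fun u _ => by rw [hAzero u, zero_mul]
      have hQ0 : ∑ u, (G.degree u : ℝ) ^ 2 = ∑ i, ((G.comap f).degree i : ℝ) ^ 2 := by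
        rw [hQrel, hdv0, hS0]
        ring
      rw [hQ0]
      apply arith0 (n:ℝ) (G.edgeFinset.card : ℝ) _ hxn hM0
      · rw [hdv0] at hC3
        linarith
      · rw [hdv0] at hIHr
        calc ∑ i, ((G.comap f).degree i : ℝ) ^ 2
            ≤ 2*((G.edgeFinset.card : ℝ) - 0)^2/((n:ℝ)-1)
              + ((G.edgeFinset.card : ℝ) - 0)*((n:ℝ)-2) := hIHr
          _ = 2*(G.edgeFinset.card : ℝ)^2/((n:ℝ)-1) + (G.edgeFinset.card : ℝ)*((n:ℝ)-2) := by
              ring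
    · -- min degree at least one
      have hd1 : (1:ℝ) ≤ (G.degree v : ℝ) := by exact_mod_cast h1
      exact arith1 (n:ℝ) (G.edgeFinset.card : ℝ) (G.degree v : ℝ) S _ _ hxn hd1 (hdlt v)
        hC1 (by linarith [hC3]) hB1 hB2 hIHr hQrel

/-- **de Caen's bound.**  For every finite simple graph on `n ≥ 2` vertices with `m` edges
and vertex degrees `k_1, …, k_n`, one has `∑ i, k_i^2 ≤ m · (2m/(n-1) + n - 2)`. -/
theorem sum_sq_degrees_le (n : ℕ) (hn : 2 ≤ n) (G : SimpleGraph (Fin n))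
    [DecidableRel G.Adj] (m : ℕ) (hm : m = G.edgeFinset.card) :
    ∑ i, (G.degree i : ℝ) ^ 2
      ≤ (m : ℝ) * (2 * (m : ℝ) / ((n : ℝ) - 1) + (n : ℝ) - 2) := by
  subst hm
  have h := aux_de_caen n hn G ‹_›
  unfold DCStmt at h
  exact h
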